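/- If Z ∈ ℝ^{d×m} and v ∈ ℝ^d lies in the column space of Z, and φ̂ is an orthogonality-equivariant function whose output columns always lie in the column space of its input, then writing Z = U S Vᵀ (compact SVD with S > 0 of size r = rank(Z)), φ̂(Z) can be written as Z W for some W ∈ ℝ^{m×m'} depending only on ZᵀZ. -/

import Mathlib

open Matrix

noncomputable section

private lemma inner_eq_dot {n : ℕ} (a b : Fin n → ℝ) :
    (inner ℝ ((WithLp.equiv 2 (Fin n → ℝ)).symm a) ((WithLp.equiv 2 (Fin n → ℝ)).symm b) : ℝ)
      = a ⬝ᵥ b := by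
  simp [PiLp.inner_apply, RCLike.inner_apply, dotProduct, mul_comm]

private lemma sandwich {d m : ℕ} (Z : Matrix (Fin d) (Fin m) ℝ) (a b : Fin m → ℝ) :
    (Z *ᵥ a) ⬝ᵥ (Z *ᵥ b) = a ⬝ᵥ ((Zᵀ * Z) *ᵥ b) := by
  rw [← Matrix.mulVec_mulVec, Matrix.dotProduct_mulVec a, Matrix.vecMul_transpose]

private lemma exists_orthogonal_of_gram_eq {d m : ℕ} (Z₁ Z₂ : Matrix (Fin d) (Fin m) ℝ)
    (h : Z₁ᵀ * Z₁ = Z₂ᵀ * Z₂) :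
    ∃ O : Matrix (Fin d) (Fin d) ℝ, Oᵀ * O = 1 ∧ Z₂ = O * Z₁ := by
  classical
  set L₁ := Matrix.toEuclideanLin Z₁ with hL₁
  set L₂ := Matrix.toEuclideanLin Z₂ with hL₂
  have hinner : ∀ x y : EuclideanSpace ℝ (Fin m),
      (inner ℝ (L₁ x) (L₁ y) : ℝ) = inner ℝ (L₂ x) (L₂ y) := by
    intro x y
    rw [hL₁, hL₂, Matrix.toEuclideanLin_apply, Matrix.toEuclideanLin_apply,
      Matrix.toEuclideanLin_apply, Matrix.toEuclideanLin_apply]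
    erw [inner_eq_dot, inner_eq_dot]
    rw [sandwich, sandwich, h]
  have hnorm : ∀ x, ‖L₁ x‖ = ‖L₂ x‖ := by
    intro x
    have h2 := hinner x x
    rw [real_inner_self_eq_norm_mul_norm, real_inner_self_eq_norm_mul_norm] at h2
    nlinarith [norm_nonneg (L₁ x), norm_nonneg (L₂ x)]
  have hker : LinearMap.ker L₁ ≤ LinearMap.ker L₂ := by
    intro x hx
    rw [LinearMap.mem_ker] at hx ⊢
    have := hnorm x
    rw [hx, norm_zero] at this
    exact norm_eq_zero.mp this.symm
  set L₂q := (LinearMap.ker L₁).liftQ L₂ hker with hL₂q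
  set e := L₁.quotKerEquivRange with he
  set g0 : ↥(LinearMap.range L₁) →ₗ[ℝ] EuclideanSpace ℝ (Fin d) :=
    L₂q ∘ₗ (e.symm : ↥(LinearMap.range L₁) →ₗ[ℝ] _) with hg0
  have hg : ∀ (x : EuclideanSpace ℝ (Fin m)) (hx : L₁ x ∈ LinearMap.range L₁),
      g0 ⟨L₁ x, hx⟩ = L₂ x := by
    intro x hx
    have he1 : e (Submodule.Quotient.mk x) = ⟨L₁ x, hx⟩ :=
      Subtype.ext (L₁.quotKerEquivRange_apply_mk x)
    rw [hg0]
    simp only [LinearMap.comp_apply, LinearEquiv.coe_coe]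
    rw [← he1, LinearEquiv.symm_apply_apply]
    exact Submodule.liftQ_apply _ _ _
  have hgnorm : ∀ v : ↥(LinearMap.range L₁), ‖g0 v‖ = ‖v‖ := by
    rintro ⟨v, x, rfl⟩
    rw [hg x ⟨x, rfl⟩]
    exact (hnorm x).symm
  set g : ↥(LinearMap.range L₁) →ₗᵢ[ℝ] EuclideanSpace ℝ (Fin d) := ⟨g0, hgnorm⟩ with hgdef
  set O' := g.extend with hO'
  have hO'L : ∀ y, O' (L₁ y) = L₂ y := by
    intro y
    have : L₁ y = ((⟨L₁ y, LinearMap.mem_range_self _ y⟩ : ↥(LinearMap.range L₁)) :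
        EuclideanSpace ℝ (Fin d)) := rfl
    rw [this, LinearIsometry.extend_apply]
    exact hg y _
  set O := Matrix.toEuclideanLin.symm O'.toLinearMap with hOdef
  have hOe : Matrix.toEuclideanLin O = O'.toLinearMap := by
    rw [hOdef]; exact Matrix.toEuclideanLin.apply_symm_apply _
  have hmul : ∀ v : Fin d → ℝ,
      O *ᵥ v = WithLp.equiv 2 (Fin d → ℝ) (O' ((WithLp.equiv 2 (Fin d → ℝ)).symm v)) := by
    intro v
    have := Matrix.toEuclideanLin_apply O ((WithLp.equiv 2 (Fin d → ℝ)).symm v)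
    rw [hOe] at this
    simp only [LinearIsometry.coe_toLinearMap] at this
    rw [this]
    simp
  have hL₁app : ∀ x : Fin m → ℝ,
      L₁ ((WithLp.equiv 2 (Fin m → ℝ)).symm x) = (WithLp.equiv 2 (Fin d → ℝ)).symm (Z₁ *ᵥ x) := by
    intro x
    rw [hL₁, Matrix.toEuclideanLin_apply]
    simp
  have hL₂app : ∀ x : Fin m → ℝ,
      L₂ ((WithLp.equiv 2 (Fin m → ℝ)).symm x) = (WithLp.equiv 2 (Fin d → ℝ)).symm (Z₂ *ᵥ x) := by
    intro x
    rw [hL₂, Matrix.toEuclideanLin_apply]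
    simp
  have hmv : ∀ x : Fin m → ℝ, O *ᵥ (Z₁ *ᵥ x) = Z₂ *ᵥ x := by
    intro x
    rw [hmul]
    rw [← hL₁app x, hO'L, hL₂app]
    simp
  constructor
  constructor
  · -- orthogonality
    have hpres : ∀ v w : Fin d → ℝ, (O *ᵥ v) ⬝ᵥ (O *ᵥ w) = v ⬝ᵥ w := by
      intro v w
      rw [hmul v, hmul w, ← inner_eq_dot]
      simp only [Equiv.symm_apply_apply]
      rw [O'.inner_map_map, inner_eq_dot]
    ext i j
    have h1 := hpres (Pi.single i 1) (Pi.single j 1)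
    rw [Matrix.mulVec_single_one, Matrix.mulVec_single_one] at h1
    have h2 : O.col i ⬝ᵥ O.col j = (Oᵀ * O) i j := by
      simp [Matrix.mul_apply, dotProduct, Matrix.transpose_apply, Matrix.col_apply]
    rw [h2] at h1
    rw [h1]
    rcases eq_or_ne i j with hij | hij
    · simp [hij, Pi.single_apply, dotProduct, Matrix.one_apply]
    · simp [hij, hij.symm, Pi.single_apply, dotProduct, Matrix.one_apply]
  · -- Z₂ = O * Z₁
    ext i j
    have h1 := congrFun (hmv (Pi.single j 1)) i
    rw [Matrix.mulVec_mulVec, Matrix.mulVec_single_one, Matrix.mulVec_single_one] at h1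
    exact h1.symm

end

theorem equivariant_column_space_factorization {d m m' : ℕ}
    (φ : Matrix (Fin d) (Fin m) ℝ → Matrix (Fin d) (Fin m') ℝ)
    (hequiv : ∀ (O : Matrix (Fin d) (Fin d) ℝ) (Z : Matrix (Fin d) (Fin m) ℝ),
      Oᵀ * O = 1 → φ (O * Z) = O * φ Z)
    (hcol : ∀ (Z : Matrix (Fin d) (Fin m) ℝ) (j : Fin m'),
      ∃ c : Fin m → ℝ, (fun i => φ Z i j) = Z.mulVec c) :
    ∃ η : Matrix (Fin m) (Fin m) ℝ → Matrix (Fin m) (Fin m') ℝ,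
      ∀ Z : Matrix (Fin d) (Fin m) ℝ, φ Z = Z * η (Zᵀ * Z) := by
  classical
  have hW : ∀ Z : Matrix (Fin d) (Fin m) ℝ,
      ∃ W : Matrix (Fin m) (Fin m') ℝ, φ Z = Z * W := by
    intro Z
    refine ⟨Matrix.of fun i j => (hcol Z j).choose i, ?_⟩
    ext i j
    have hs := congrFun (hcol Z j).choose_spec i
    simpa [Matrix.mul_apply, Matrix.mulVec, dotProduct] using hs
  choose W hWspec using hW
  refine ⟨fun G => if h : ∃ Z : Matrix (Fin d) (Fin m) ℝ, Zᵀ * Z = G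
    then W h.choose else 0, ?_⟩
  intro Z
  have hex : ∃ Z' : Matrix (Fin d) (Fin m) ℝ, Z'ᵀ * Z' = Zᵀ * Z := ⟨Z, rfl⟩
  dsimp only
  rw [dif_pos hex]
  obtain ⟨O, hO, hOZ⟩ := exists_orthogonal_of_gram_eq hex.choose Z hex.choose_spec
  calc φ Z = φ (O * hex.choose) := by rw [← hOZ]
    _ = O * φ hex.choose := hequiv _ _ hO
    _ = O * (hex.choose * W hex.choose) := by rw [hWspec]
    _ = (O * hex.choose) * W hex.choose := by rw [Matrix.mul_assoc]
    _ = Z * W hex.choose := by rw [← hOZ]
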